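/- The center of the even part HO_0̄ of the odd Hamiltonian superalgebra is zero: C(HO_0̄) = 0. -/

import Mathlib

open scoped BigOperators Classical

/-! A concrete model of the truncated divided power superalgebra
`O(n,n;t̲)` over a field `F` of characteristic `p > 3`, of the generalized Witt
superalgebra `W(n,n;t̲)` and of the odd Hamiltonian map `T_H`.  A basis element of
`O(n,n;t̲)` is `x^(α) x^u` with `α i ≤ p^(t i) − 1` and `u ⊆ {n+1,…,2n}` (odd
indices are represented by `Fin n`, with `k : Fin n` standing for `x_{n+k}`);
an element of `O(n,n;t̲)` is its family of coefficients. -/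

section OddHam

variable (p n : ℕ) (t : Fin n → ℕ) (F : Type*) [Field F]

/-- Index set for the monomial basis `x^(α) x^u` of `O(n,n;t̲)`. -/
abbrev Idx := ((i : Fin n) → Fin (p ^ t i)) × Finset (Fin n)

/-- The truncated divided power superalgebra `O(n,n;t̲)`, as coefficient families. -/
abbrev O := Idx p n t → F

/-- Multiplication of `O(n,n;t̲)`:  `x^(α) x^(β) = (∏ᵢ C(αᵢ+βᵢ, αᵢ)) x^(α+β)`
(truncated), and the exterior variables anticommute. -/
noncomputable def omul (f g : O p n t F) : O p n t F := fun x =>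
  ∑ y : Idx p n t, ∑ z : Idx p n t,
    if (∀ i, (y.1 i : ℕ) + (z.1 i : ℕ) = (x.1 i : ℕ)) ∧ Disjoint y.2 z.2 ∧ y.2 ∪ z.2 = x.2
    then f y * g z * (∏ i, (((x.1 i : ℕ).choose (y.1 i : ℕ) : ℕ) : F)) *
      (-1 : F) ^ (∑ a ∈ y.2, ((z.2.filter fun b => b < a).card))
    else 0

/-- The even superderivation `∂_i`, `i ∈ Y_0`:  `∂_i (x^(α)) = x^(α − ε_i)`. -/
noncomputable def dEven (i : Fin n) (f : O p n t F) : O p n t F := fun x =>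
  if h : (x.1 i : ℕ) + 1 < p ^ t i
  then f (Function.update x.1 i ⟨(x.1 i : ℕ) + 1, h⟩, x.2)
  else 0

/-- The odd superderivation `∂_{n+k}`, `k ∈ Y_1`. -/
noncomputable def dOdd (k : Fin n) (f : O p n t F) : O p n t F := fun x =>
  if k ∈ x.2 then 0
  else (-1 : F) ^ ((x.2.filter fun b => b < k).card) * f (x.1, insert k x.2)

/-- The generalized Witt superalgebra `W(n,n;t̲)`: an element `Σ_r f_r ∂_r` is
recorded as the family of its coefficients, `Sum.inl i ↦` coefficient of the even
`∂_i` and `Sum.inr k ↦` coefficient of the odd `∂_{n+k}`. -/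
abbrev W := (Fin n ⊕ Fin n) → O p n t F

/-- The superderivation `∂_r` for `r ∈ Y = Y_0 ∪ Y_1`. -/
noncomputable def dd (r : Fin n ⊕ Fin n) : O p n t F → O p n t F :=
  Sum.elim (dEven p n t F) (dOdd p n t F) r

/-- The action of `X = Σ_r X_r ∂_r ∈ W(n,n;t̲)` on `O(n,n;t̲)`. -/
noncomputable def act (X : W p n t F) (b : O p n t F) : O p n t F :=
  ∑ r : Fin n ⊕ Fin n, omul p n t F (X r) (dd p n t F r b)

/-- `a` is `ℤ₂`-homogeneous of parity `pa`. -/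
def Homog (pa : ℕ) (a : O p n t F) : Prop :=
  ∀ x, a x ≠ 0 → x.2.card % 2 = pa % 2

/-- The odd Hamiltonian map `T_H (a) = Σ_{i=1}^{2n} (−1)^{μ(i) p(a)} ∂_i(a) ∂_{i'}`,
for `a` homogeneous of parity `pa`. -/
noncomputable def TH (pa : ℕ) (a : O p n t F) : W p n t F :=
  Sum.elim (fun i => ((-1 : F) ^ pa) • dOdd p n t F i a) (fun k => dEven p n t F k a)

/-- The superbracket of `W(n,n;t̲)` on homogeneous elements `X, Y` of parities
`px, py`:  `[X,Y] = Σ_s (Σ_r X_r ∂_r(Y_s)) ∂_s − (−1)^{px·py} Σ_s (Σ_r Y_r ∂_r(X_s)) ∂_s`. -/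
noncomputable def brkH (px py : ℕ) (X Y : W p n t F) : W p n t F := fun s =>
  act p n t F X (Y s) - ((-1 : F) ^ (px * py)) • act p n t F Y (X s)

/-- The divided power monomial `x^(q ε_i)`. -/
noncomputable def epow (i : Fin n) (q : ℕ) : O p n t F := fun x =>
  if (∀ j, (x.1 j : ℕ) = if j = i then q else 0) ∧ x.2 = ∅ then 1 else 0

/-- The even variable `x_i`, `i ∈ Y_0`. -/
noncomputable def evar (i : Fin n) : O p n t F := epow p n t F i 1

/-- The odd variable `x_{n+k}`, `k ∈ Y_1`. -/
noncomputable def ovar (k : Fin n) : O p n t F := fun x =>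
  if (∀ j, (x.1 j : ℕ) = 0) ∧ x.2 = {k} then 1 else 0

/-- `Δ_i = T_H(x_i x_{i'}) = x_{i'} ∂_{i'} − x_i ∂_i`. -/
noncomputable def Delta (i : Fin n) : W p n t F :=
  TH p n t F 1 (omul p n t F (evar p n t F i) (ovar p n t F i))

end OddHam

section OddHam2

variable (p n : ℕ) (t : Fin n → ℕ) (F : Type*) [Field F]

/-- The bracket of the even part `W(n,n;t̲)_0̄` (both arguments of parity `0̄`). -/
noncomputable def brk0 (X Y : W p n t F) : W p n t F := brkH p n t F 0 0 X Y

/-- The even part `HO(n,n;t̲)_0̄` of the odd Hamiltonian superalgebra: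
the set of elements `T_H(a)` with `a` odd. -/
def HO0 : Set (W p n t F) :=
  {X | ∃ a : O p n t F, Homog p n t F 1 a ∧ X = TH p n t F 1 a}

/-- `ℤ`-degree of the basis monomial `x^(α) x^u`:  `|α| + |u|`. -/
def degI (x : Idx p n t) : ℕ := (∑ i, (x.1 i : ℕ)) + x.2.card

/-- `X ∈ W(n,n;t̲)` is `ℤ`-homogeneous of degree `d` (coefficients of degree `d + 1`). -/
def WHomog (d : ℤ) (X : W p n t F) : Prop :=
  ∀ r x, X r x ≠ 0 → (degI p n t x : ℤ) = d + 1

/-- `Γ = Σ_{i=1}^n x_{i'} ∂_{i'}`. -/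
noncomputable def Gamma : W p n t F := Sum.elim (fun _ => 0) (ovar p n t F)

/-- The constant `1 ∈ O(n,n;t̲)`. -/
noncomputable def oneO : O p n t F := fun x =>
  if (∀ j, (x.1 j : ℕ) = 0) ∧ x.2 = ∅ then 1 else 0

/-- `∂_i ∈ W(n,n;t̲)` for an even index `i ∈ Y_0`. -/
noncomputable def Del (i : Fin n) : W p n t F :=
  Sum.elim (fun j => if j = i then oneO p n t F else 0) (fun _ => 0)

/-- `D` represents a derivation of the Lie algebra `HO(n,n;t̲)_0̄`
(a linear map preserving `HO_0̄` and satisfying the Leibniz rule there). -/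
def IsDerW (D : W p n t F → W p n t F) : Prop :=
  (∀ X Y, D (X + Y) = D X + D Y) ∧
  (∀ (c : F) X, D (c • X) = c • D X) ∧
  (∀ X ∈ HO0 p n t F, D X ∈ HO0 p n t F) ∧
  (∀ X Y, X ∈ HO0 p n t F → Y ∈ HO0 p n t F →
    D (brk0 p n t F X Y) = brk0 p n t F (D X) Y + brk0 p n t F X (D Y))

/-- `D` represents a derivation of `HO(n,n;t̲)_0̄` of `ℤ`-degree `d`. -/
def IsDerDeg (d : ℤ) (D : W p n t F → W p n t F) : Prop :=
  IsDerW p n t F D ∧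
  ∀ (k : ℤ) X, X ∈ HO0 p n t F → WHomog p n t F k X → WHomog p n t F (k + d) (D X)

end OddHam2
section Aux
variable (p n : ℕ) (t : Fin n → ℕ) (F : Type*) [Field F]

lemma omul_smul_left (c : F) (f g : O p n t F) :
    omul p n t F (c • f) g = c • omul p n t F f g := by
  funext x
  simp only [omul, Pi.smul_apply, smul_eq_mul, Finset.mul_sum]
  refine Finset.sum_congr rfl fun y _ => Finset.sum_congr rfl fun z _ => ?_
  split <;> ring

lemma omul_smul_right (c : F) (f g : O p n t F) :
    omul p n t F f (c • g) = c • omul p n t F f g := by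
  funext x
  simp only [omul, Pi.smul_apply, smul_eq_mul, Finset.mul_sum]
  refine Finset.sum_congr rfl fun y _ => Finset.sum_congr rfl fun z _ => ?_
  split <;> ring

lemma omul_zero_left (g : O p n t F) : omul p n t F 0 g = 0 := by
  have h := omul_smul_left p n t F 0 (0 : O p n t F) g
  simpa using h

lemma omul_zero_right (f : O p n t F) : omul p n t F f 0 = 0 := by
  have h := omul_smul_right p n t F 0 f (0 : O p n t F)
  simpa using h

lemma dEven_smul (c : F) (i : Fin n) (f : O p n t F) :
    dEven p n t F i (c • f) = c • dEven p n t F i f := by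
  funext x
  simp only [dEven, Pi.smul_apply, smul_eq_mul]
  split <;> simp

lemma dOdd_smul (c : F) (k : Fin n) (f : O p n t F) :
    dOdd p n t F k (c • f) = c • dOdd p n t F k f := by
  funext x
  simp only [dOdd, Pi.smul_apply, smul_eq_mul]
  split <;> ring

lemma dd_smul (c : F) (r : Fin n ⊕ Fin n) (f : O p n t F) :
    dd p n t F r (c • f) = c • dd p n t F r f := by
  cases r <;> simp [dd, dEven_smul, dOdd_smul]

lemma act_smul (Z : W p n t F) (c : F) (f : O p n t F) :
    act p n t F Z (c • f) = c • act p n t F Z f := by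
  unfold act
  rw [Finset.smul_sum]
  refine Finset.sum_congr rfl fun r _ => ?_
  rw [dd_smul, omul_smul_right]

lemma act_zero (Z : W p n t F) : act p n t F Z 0 = 0 := by
  have h := act_smul p n t F Z 0 0
  simpa using h

end Aux
section Aux2
variable (p n : ℕ) (t : Fin n → ℕ) (F : Type*) [Field F]

lemma omul_one_left (hp0 : 0 < p) (f : O p n t F) :
    omul p n t F (oneO p n t F) f = f := by
  funext x
  unfold omul
  have hpos : ∀ i, 0 < p ^ t i := fun i => pow_pos hp0 _
  set y₀ : Idx p n t := (fun i => ⟨0, hpos i⟩, (∅ : Finset (Fin n))) with hy₀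
  have hone : oneO p n t F y₀ = 1 := by simp [oneO, hy₀]
  rw [Finset.sum_eq_single y₀]
  · rw [Finset.sum_eq_single x]
    · have hcond : (∀ i, ((y₀.1 i : ℕ)) + ((x.1 i : ℕ)) = ((x.1 i : ℕ))) ∧
          Disjoint y₀.2 x.2 ∧ y₀.2 ∪ x.2 = x.2 := by
        refine ⟨fun i => by simp [hy₀], by simp [hy₀], by simp [hy₀]⟩
      rw [if_pos hcond, hone]
      have h1 : ∀ i : Fin n, (((x.1 i : ℕ).choose ((y₀.1 i : ℕ)) : ℕ) : F) = 1 := by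
        intro i; simp [hy₀]
      simp [h1, hy₀]
    · intro z _ hz
      split
      · next hc =>
        exfalso; apply hz
        obtain ⟨h1, _, h3⟩ := hc
        refine Prod.ext ?_ ?_
        · funext i; exact Fin.ext (by simpa [hy₀] using (h1 i))
        · simpa [hy₀] using h3
      · rfl
    · intro h; exact absurd (Finset.mem_univ x) h
  · intro y _ hy
    refine Finset.sum_eq_zero fun z _ => ?_
    have h0 : oneO p n t F y = 0 := by
      by_cases hc : (∀ j, ((y.1 j : ℕ)) = 0) ∧ y.2 = ∅
      · exfalso; apply hy
        refine Prod.ext ?_ ?_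
        · funext i; exact Fin.ext (by simpa using (hc.1 i))
        · simpa [hy₀] using hc.2
      · simp [oneO, hc]
    rw [h0]; split <;> simp
  · intro h; exact absurd (Finset.mem_univ y₀) h

lemma omul_one_right (hp0 : 0 < p) (f : O p n t F) :
    omul p n t F f (oneO p n t F) = f := by
  funext x
  unfold omul
  have hpos : ∀ i, 0 < p ^ t i := fun i => pow_pos hp0 _
  set z₀ : Idx p n t := (fun i => ⟨0, hpos i⟩, (∅ : Finset (Fin n))) with hz₀
  have hone : oneO p n t F z₀ = 1 := by simp [oneO, hz₀]
  have hinner : ∀ y : Idx p n t, (∑ z : Idx p n t,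
      if (∀ i, (y.1 i : ℕ) + (z.1 i : ℕ) = (x.1 i : ℕ)) ∧ Disjoint y.2 z.2 ∧ y.2 ∪ z.2 = x.2
      then f y * oneO p n t F z * (∏ i, (((x.1 i : ℕ).choose (y.1 i : ℕ) : ℕ) : F)) *
        (-1 : F) ^ (∑ a ∈ y.2, ((z.2.filter fun b => b < a).card))
      else 0) =
      if (∀ i, (y.1 i : ℕ) = (x.1 i : ℕ)) ∧ y.2 = x.2
      then f y * (∏ i, (((x.1 i : ℕ).choose (y.1 i : ℕ) : ℕ) : F))
      else 0 := by
    intro y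
    rw [Finset.sum_eq_single z₀]
    · rw [hone]
      by_cases hc : (∀ i, (y.1 i : ℕ) = (x.1 i : ℕ)) ∧ y.2 = x.2
      · have : (∀ i, (y.1 i : ℕ) + ((z₀.1 i : ℕ)) = (x.1 i : ℕ)) ∧
            Disjoint y.2 z₀.2 ∧ y.2 ∪ z₀.2 = x.2 := by
          refine ⟨fun i => by simp [hz₀, hc.1 i], by simp [hz₀], by simp [hz₀, hc.2]⟩
        rw [if_pos this, if_pos hc]
        simp [hz₀]
      · rw [if_neg ?_, if_neg hc]
        intro ⟨h1, _, h3⟩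
        exact hc ⟨fun i => by simpa [hz₀] using h1 i, by simpa [hz₀] using h3⟩
    · intro z _ hz
      have h0 : oneO p n t F z = 0 := by
        by_cases hc : (∀ j, ((z.1 j : ℕ)) = 0) ∧ z.2 = ∅
        · exfalso; apply hz
          refine Prod.ext ?_ ?_
          · funext i; exact Fin.ext (by simpa using (hc.1 i))
          · simpa [hz₀] using hc.2
        · simp [oneO, hc]
      rw [h0]; split <;> simp
    · intro h; exact absurd (Finset.mem_univ z₀) h
  rw [Finset.sum_congr rfl fun y _ => hinner y]
  rw [Finset.sum_eq_single x]
  · rw [if_pos ⟨fun i => rfl, rfl⟩]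
    simp
  · intro y _ hy
    split
    · next hc =>
      exfalso; apply hy
      exact Prod.ext (funext fun i => Fin.ext (hc.1 i)) hc.2
    · rfl
  · intro h; exact absurd (Finset.mem_univ x) h

lemma omul_ovar (hp0 : 0 < p) (k : Fin n) (f : O p n t F) (x : Idx p n t) :
    omul p n t F (ovar p n t F k) f x =
      if k ∈ x.2 then
        (-1 : F) ^ (((x.2.erase k).filter (fun b => b < k)).card) * f (x.1, x.2.erase k)
      else 0 := by
  unfold omul
  have hpos : ∀ i, 0 < p ^ t i := fun i => pow_pos hp0 _
  set y₀ : Idx p n t := (fun i => ⟨0, hpos i⟩, ({k} : Finset (Fin n))) with hy₀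
  have hone : ovar p n t F k y₀ = 1 := by simp [ovar, hy₀]
  rw [Finset.sum_eq_single y₀]
  · by_cases hk : k ∈ x.2
    · rw [if_pos hk, Finset.sum_eq_single ((x.1, x.2.erase k) : Idx p n t)]
      · have hcond : (∀ i, ((y₀.1 i : ℕ)) + ((x.1 i : ℕ)) = ((x.1 i : ℕ))) ∧
            Disjoint y₀.2 (x.2.erase k) ∧ y₀.2 ∪ x.2.erase k = x.2 := by
          refine ⟨fun i => by simp [hy₀], ?_, ?_⟩
          · simp [hy₀]
          · rw [hy₀]; simp only [← Finset.insert_eq]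
            exact Finset.insert_erase hk
        rw [if_pos hcond, hone]
        have h1 : ∀ i : Fin n, (((x.1 i : ℕ).choose ((y₀.1 i : ℕ)) : ℕ) : F) = 1 := by
          intro i; simp [hy₀]
        simp only [hy₀, Finset.sum_singleton, h1, Nat.choose_zero_right, Nat.cast_one, Finset.prod_const_one]
        ring
      · intro z _ hz
        split
        · next hc =>
          exfalso; apply hz
          obtain ⟨h1, h2, h3⟩ := hc
          have hz2 : z.2 = x.2.erase k := by
            have hknz : k ∉ z.2 := by
              have := Finset.disjoint_left.mp h2 (by simp [hy₀] : k ∈ y₀.2)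
              exact this
            apply Finset.Subset.antisymm
            · intro b hb
              refine Finset.mem_erase.mpr ⟨?_, ?_⟩
              · rintro rfl; exact hknz hb
              · rw [← h3]; exact Finset.mem_union_right _ hb
            · intro b hb
              obtain ⟨hbk, hbx⟩ := Finset.mem_erase.mp hb
              rw [← h3] at hbx
              rcases Finset.mem_union.mp hbx with h | h
              · exact absurd (by simpa [hy₀] using h) hbk
              · exact h
          refine Prod.ext ?_ hz2
          funext i; exact Fin.ext (by simpa [hy₀] using (h1 i))
        · rfl
      · intro h; exact absurd (Finset.mem_univ _) h
    · rw [if_neg hk]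
      refine Finset.sum_eq_zero fun z _ => ?_
      split
      · next hc =>
        exfalso; apply hk
        rw [← hc.2.2]
        exact Finset.mem_union_left _ (by simp [hy₀])
      · rfl
  · intro y _ hy
    refine Finset.sum_eq_zero fun z _ => ?_
    have h0 : ovar p n t F k y = 0 := by
      by_cases hc : (∀ j, ((y.1 j : ℕ)) = 0) ∧ y.2 = {k}
      · exfalso; apply hy
        refine Prod.ext ?_ ?_
        · funext i; exact Fin.ext (by simpa using (hc.1 i))
        · simpa [hy₀] using hc.2
      · simp [ovar, hc]
    rw [h0]; split <;> simp
  · intro h; exact absurd (Finset.mem_univ y₀) h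

end Aux2
section Aux3
variable (p n : ℕ) (t : Fin n → ℕ) (F : Type*) [Field F]

lemma dEven_one (i : Fin n) : dEven p n t F i (oneO p n t F) = 0 := by
  funext x
  simp only [dEven, oneO, Pi.zero_apply]
  split
  · rw [if_neg]
    rintro ⟨h, -⟩
    have := h i
    rw [Function.update_self] at this
    simp at this
  · rfl

lemma dOdd_one (k : Fin n) : dOdd p n t F k (oneO p n t F) = 0 := by
  funext x
  simp only [dOdd, oneO, Pi.zero_apply]
  split
  · rfl
  · next hk =>
    rw [if_neg, mul_zero]
    rintro ⟨-, h⟩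
    exact absurd (h ▸ Finset.mem_insert_self k x.2) (Finset.notMem_empty k)

lemma dOdd_evar (kk j : Fin n) : dOdd p n t F kk (evar p n t F j) = 0 := by
  funext x
  simp only [dOdd, evar, epow, Pi.zero_apply]
  split
  · rfl
  · rw [if_neg, mul_zero]
    rintro ⟨-, h⟩
    exact absurd (h ▸ Finset.mem_insert_self kk x.2) (Finset.notMem_empty kk)

lemma dEven_ovar (i k : Fin n) : dEven p n t F i (ovar p n t F k) = 0 := by
  funext x
  simp only [dEven, ovar, Pi.zero_apply]
  split
  · rw [if_neg]
    rintro ⟨h, -⟩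
    have := h i
    rw [Function.update_self] at this
    simp at this
  · rfl

lemma dEven_evar (j : Fin n) (h1 : 1 < p ^ t j) (i : Fin n) :
    dEven p n t F i (evar p n t F j) = if i = j then oneO p n t F else 0 := by
  by_cases hij : i = j
  · subst hij
    rw [if_pos rfl]
    funext x
    simp only [dEven, evar, epow, oneO]
    split
    · next h =>
      refine if_congr ⟨?_, ?_⟩ rfl rfl
      · rintro ⟨hc, h2⟩
        refine ⟨fun jj => ?_, h2⟩
        by_cases hji : jj = i
        · subst hji
          have h3 := hc jj
          rw [Function.update_self, if_pos rfl] at h3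
          have h4 : (x.1 jj : ℕ) + 1 = 1 := h3
          omega
        · have := hc jj
          rwa [Function.update_of_ne hji, if_neg hji] at this
      · rintro ⟨hc, h2⟩
        refine ⟨fun jj => ?_, h2⟩
        by_cases hji : jj = i
        · subst hji
          rw [Function.update_self, if_pos rfl]
          show (x.1 jj : ℕ) + 1 = 1
          have := hc jj
          omega
        · rw [Function.update_of_ne hji, if_neg hji]
          exact hc jj
    · next h =>
      rw [if_neg]
      rintro ⟨hc, -⟩
      have := hc i
      omega
  · rw [if_neg hij]
    funext x
    simp only [dEven, evar, epow, Pi.zero_apply]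
    split
    · rw [if_neg]
      rintro ⟨hc, -⟩
      have := hc i
      rw [Function.update_self, if_neg hij] at this
      simp at this
    · rfl

lemma dOdd_ovar (l k : Fin n) :
    dOdd p n t F l (ovar p n t F k) = if l = k then oneO p n t F else 0 := by
  by_cases hlk : l = k
  · subst hlk
    rw [if_pos rfl]
    funext x
    simp only [dOdd, ovar, oneO]
    by_cases hk : l ∈ x.2
    · rw [if_pos hk, if_neg]
      rintro ⟨-, h⟩
      rw [h] at hk
      simp at hk
    · rw [if_neg hk]
      have hiff : ((∀ j, ((x.1 j : ℕ)) = 0) ∧ insert l x.2 = {l}) ↔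
          ((∀ j, ((x.1 j : ℕ)) = 0) ∧ x.2 = ∅) := by
        constructor
        · rintro ⟨h1, h2⟩
          refine ⟨h1, Finset.eq_empty_iff_forall_notMem.mpr fun b hb => ?_⟩
          have hb2 : b ∈ insert l x.2 := Finset.mem_insert_of_mem hb
          rw [h2, Finset.mem_singleton] at hb2
          subst hb2; exact hk hb
        · rintro ⟨h1, h2⟩
          rw [h2]
          exact ⟨h1, rfl⟩
      rw [if_congr hiff rfl rfl]
      split
      · next hc =>
        rw [hc.2]
        simp
      · rw [mul_zero]
  · rw [if_neg hlk]
    funext x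
    simp only [dOdd, Pi.zero_apply]
    split
    · rfl
    · rw [show ovar p n t F k (x.1, insert l x.2) = 0 from ?_, mul_zero]
      simp only [ovar]
      rw [if_neg]
      rintro ⟨-, h⟩
      exact hlk (Finset.mem_singleton.mp (h ▸ Finset.mem_insert_self l x.2))

end Aux3
section Aux4
variable (p n : ℕ) (t : Fin n → ℕ) (F : Type*) [Field F]

/-- The monomial `x_j x_{n+k}`. -/
noncomputable def mon (j k : Fin n) : O p n t F := fun x =>
  if (∀ i, (x.1 i : ℕ) = if i = j then 1 else 0) ∧ x.2 = {k} then 1 else 0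

lemma dOdd_mon (j k m : Fin n) :
    dOdd p n t F m (mon p n t F j k) = if m = k then evar p n t F j else 0 := by
  by_cases hmk : m = k
  · subst hmk
    rw [if_pos rfl]
    funext x
    simp only [dOdd, mon, evar, epow]
    by_cases hk : m ∈ x.2
    · rw [if_pos hk, if_neg]
      rintro ⟨-, h⟩
      rw [h] at hk
      simp at hk
    · rw [if_neg hk]
      have hiff : ((∀ i, ((x.1 i : ℕ)) = if i = j then 1 else 0) ∧ insert m x.2 = {m}) ↔
          ((∀ i, ((x.1 i : ℕ)) = if i = j then 1 else 0) ∧ x.2 = ∅) := by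
        constructor
        · rintro ⟨h1, h2⟩
          refine ⟨h1, Finset.eq_empty_iff_forall_notMem.mpr fun b hb => ?_⟩
          have hb2 : b ∈ insert m x.2 := Finset.mem_insert_of_mem hb
          rw [h2, Finset.mem_singleton] at hb2
          subst hb2; exact hk hb
        · rintro ⟨h1, h2⟩
          rw [h2]
          exact ⟨h1, rfl⟩
      rw [if_congr hiff rfl rfl]
      split
      · next hc =>
        rw [hc.2]
        simp
      · rw [mul_zero]
  · rw [if_neg hmk]
    funext x
    simp only [dOdd, Pi.zero_apply]
    split
    · rfl
    · rw [show mon p n t F j k (x.1, insert m x.2) = 0 from ?_, mul_zero]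
      simp only [mon]
      rw [if_neg]
      rintro ⟨-, h⟩
      exact hmk (Finset.mem_singleton.mp (h ▸ Finset.mem_insert_self m x.2))

lemma dEven_mon (j k : Fin n) (h1 : 1 < p ^ t j) (m : Fin n) :
    dEven p n t F m (mon p n t F j k) = if m = j then ovar p n t F k else 0 := by
  by_cases hmj : m = j
  · subst hmj
    rw [if_pos rfl]
    funext x
    simp only [dEven, mon, ovar]
    split
    · next h =>
      refine if_congr ⟨?_, ?_⟩ rfl rfl
      · rintro ⟨hc, h2⟩
        refine ⟨fun jj => ?_, h2⟩
        by_cases hji : jj = m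
        · subst hji
          have h3 := hc jj
          rw [Function.update_self, if_pos rfl] at h3
          have h4 : (x.1 jj : ℕ) + 1 = 1 := h3
          omega
        · have := hc jj
          rwa [Function.update_of_ne hji, if_neg hji] at this
      · rintro ⟨hc, h2⟩
        refine ⟨fun jj => ?_, h2⟩
        by_cases hji : jj = m
        · subst hji
          rw [Function.update_self, if_pos rfl]
          show (x.1 jj : ℕ) + 1 = 1
          have := hc jj
          omega
        · rw [Function.update_of_ne hji, if_neg hji]
          exact hc jj
    · next h =>
      rw [if_neg]
      rintro ⟨hc, -⟩
      have := hc m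
      omega
  · rw [if_neg hmj]
    funext x
    simp only [dEven, mon, Pi.zero_apply]
    split
    · rw [if_neg]
      rintro ⟨hc, -⟩
      have := hc m
      rw [Function.update_self, if_neg hmj] at this
      simp at this
    · rfl

lemma omul_ovar_dOdd (hp0 : 0 < p) (k : Fin n) (f : O p n t F) (x : Idx p n t) :
    omul p n t F (ovar p n t F k) (dOdd p n t F k f) x = if k ∈ x.2 then f x else 0 := by
  rw [omul_ovar p n t F hp0]
  by_cases hk : k ∈ x.2
  · rw [if_pos hk, if_pos hk]
    have hkn : k ∉ x.2.erase k := Finset.notMem_erase k x.2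
    have hd : dOdd p n t F k f (x.1, x.2.erase k) =
        (-1 : F) ^ (((x.2.erase k).filter (fun b => b < k)).card) * f (x.1, x.2) := by
      simp only [dOdd]
      rw [if_neg hkn, Finset.insert_erase hk]
    rw [hd, ← mul_assoc, ← pow_add, Even.neg_one_pow ⟨_, rfl⟩, one_mul]
  · rw [if_neg hk, if_neg hk]

lemma act_evar (hp0 : 0 < p) (j : Fin n) (h1 : 1 < p ^ t j) (Z : W p n t F) :
    act p n t F Z (evar p n t F j) = Z (Sum.inl j) := by
  unfold act
  rw [Fintype.sum_sum_type]
  have hsum2 : (∑ m : Fin n,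
      omul p n t F (Z (Sum.inr m)) (dd p n t F (Sum.inr m) (evar p n t F j))) = 0 := by
    refine Finset.sum_eq_zero fun m _ => ?_
    show omul p n t F (Z (Sum.inr m)) (dOdd p n t F m (evar p n t F j)) = 0
    rw [dOdd_evar, omul_zero_right]
  have hsum1 : (∑ i : Fin n,
      omul p n t F (Z (Sum.inl i)) (dd p n t F (Sum.inl i) (evar p n t F j))) = Z (Sum.inl j) := by
    rw [Finset.sum_eq_single j]
    · show omul p n t F (Z (Sum.inl j)) (dEven p n t F j (evar p n t F j)) = Z (Sum.inl j)
      rw [dEven_evar p n t F j h1, if_pos rfl, omul_one_right p n t F hp0]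
    · intro i _ hij
      show omul p n t F (Z (Sum.inl i)) (dEven p n t F i (evar p n t F j)) = 0
      rw [dEven_evar p n t F j h1, if_neg hij, omul_zero_right]
    · intro h; exact absurd (Finset.mem_univ j) h
  rw [hsum1, hsum2, add_zero]

lemma act_ovar (hp0 : 0 < p) (k : Fin n) (Z : W p n t F) :
    act p n t F Z (ovar p n t F k) = Z (Sum.inr k) := by
  unfold act
  rw [Fintype.sum_sum_type]
  have hsum1 : (∑ i : Fin n,
      omul p n t F (Z (Sum.inl i)) (dd p n t F (Sum.inl i) (ovar p n t F k))) = 0 := by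
    refine Finset.sum_eq_zero fun i _ => ?_
    show omul p n t F (Z (Sum.inl i)) (dEven p n t F i (ovar p n t F k)) = 0
    rw [dEven_ovar, omul_zero_right]
  have hsum2 : (∑ m : Fin n,
      omul p n t F (Z (Sum.inr m)) (dd p n t F (Sum.inr m) (ovar p n t F k))) = Z (Sum.inr k) := by
    rw [Finset.sum_eq_single k]
    · show omul p n t F (Z (Sum.inr k)) (dOdd p n t F k (ovar p n t F k)) = Z (Sum.inr k)
      rw [dOdd_ovar, if_pos rfl, omul_one_right p n t F hp0]
    · intro m _ hmk
      show omul p n t F (Z (Sum.inr m)) (dOdd p n t F m (ovar p n t F k)) = 0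
      rw [dOdd_ovar, if_neg hmk, omul_zero_right]
    · intro h; exact absurd (Finset.mem_univ k) h
  rw [hsum1, hsum2, zero_add]

end Aux4
section Aux5
variable (p n : ℕ) (t : Fin n → ℕ) (F : Type*) [Field F]

lemma TH_inl (a : O p n t F) (i : Fin n) :
    TH p n t F 1 a (Sum.inl i) = ((-1 : F) ^ 1) • dOdd p n t F i a := rfl

lemma TH_inr (a : O p n t F) (k : Fin n) :
    TH p n t F 1 a (Sum.inr k) = dEven p n t F k a := rfl

lemma act_TH_mon (hp0 : 0 < p) (j k : Fin n) (h1 : 1 < p ^ t j) (g : O p n t F)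
    (hg : dEven p n t F k g = 0) :
    act p n t F (TH p n t F 1 (mon p n t F j k)) g =
      omul p n t F (ovar p n t F k) (dOdd p n t F j g) := by
  unfold act
  rw [Fintype.sum_sum_type]
  have hsum1 : (∑ i : Fin n, omul p n t F (TH p n t F 1 (mon p n t F j k) (Sum.inl i))
      (dd p n t F (Sum.inl i) g)) = 0 := by
    refine Finset.sum_eq_zero fun i _ => ?_
    rw [TH_inl]
    show omul p n t F (((-1 : F) ^ 1) • dOdd p n t F i (mon p n t F j k))
      (dEven p n t F i g) = 0
    rw [dOdd_mon]
    by_cases hik : i = k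
    · subst hik
      rw [if_pos rfl, hg, omul_zero_right]
    · rw [if_neg hik, smul_zero, omul_zero_left]
  have hsum2 : (∑ m : Fin n, omul p n t F (TH p n t F 1 (mon p n t F j k) (Sum.inr m))
      (dd p n t F (Sum.inr m) g)) =
      omul p n t F (ovar p n t F k) (dOdd p n t F j g) := by
    rw [Finset.sum_eq_single j]
    · rw [TH_inr]
      show omul p n t F (dEven p n t F j (mon p n t F j k)) (dOdd p n t F j g) = _
      rw [dEven_mon p n t F j k h1, if_pos rfl]
    · intro m _ hmj
      rw [TH_inr]
      show omul p n t F (dEven p n t F m (mon p n t F j k)) (dOdd p n t F m g) = 0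
      rw [dEven_mon p n t F j k h1, if_neg hmj, omul_zero_left]
    · intro h; exact absurd (Finset.mem_univ j) h
  rw [hsum1, hsum2, zero_add]

lemma brk_eq (Z X : W p n t F) (h : brk0 p n t F Z X = 0) (s : Fin n ⊕ Fin n) :
    act p n t F X (Z s) = act p n t F Z (X s) := by
  have h2 := congrFun h s
  simp only [brk0, brkH, Pi.zero_apply, Nat.mul_zero, pow_zero, one_smul] at h2
  exact (sub_eq_zero.mp h2).symm

lemma E1 (hp0 : 0 < p) (Z : W p n t F) (j k : Fin n) (h1 : 1 < p ^ t j)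
    (hstep1 : ∀ s, dEven p n t F k (Z s) = 0)
    (hbrk : brk0 p n t F Z (TH p n t F 1 (mon p n t F j k)) = 0) (l : Fin n) :
    omul p n t F (ovar p n t F k) (dOdd p n t F j (Z (Sum.inl l))) =
      ((-1 : F) ^ 1) • (if l = k then Z (Sum.inl j) else 0) := by
  have h2 := brk_eq p n t F Z _ hbrk (Sum.inl l)
  rw [act_TH_mon p n t F hp0 j k h1 _ (hstep1 _)] at h2
  rw [h2, TH_inl, act_smul]
  congr 1
  by_cases hlk : l = k
  · rw [if_pos hlk, dOdd_mon, if_pos hlk, act_evar p n t F hp0 j h1]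
  · rw [if_neg hlk, dOdd_mon, if_neg hlk, act_zero]

lemma E2 (hp0 : 0 < p) (Z : W p n t F) (j k : Fin n) (h1 : 1 < p ^ t j)
    (hstep1 : ∀ s, dEven p n t F k (Z s) = 0)
    (hbrk : brk0 p n t F Z (TH p n t F 1 (mon p n t F j k)) = 0) (l : Fin n) :
    omul p n t F (ovar p n t F k) (dOdd p n t F j (Z (Sum.inr l))) =
      (if l = j then Z (Sum.inr k) else 0) := by
  have h2 := brk_eq p n t F Z _ hbrk (Sum.inr l)
  rw [act_TH_mon p n t F hp0 j k h1 _ (hstep1 _)] at h2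
  rw [h2, TH_inr]
  by_cases hlj : l = j
  · rw [if_pos hlj, dEven_mon p n t F j k h1, if_pos hlj, act_ovar p n t F hp0]
  · rw [if_neg hlj, dEven_mon p n t F j k h1, if_neg hlj, act_zero]

end Aux5
section Aux6
variable (p n : ℕ) (t : Fin n → ℕ) (F : Type*) [Field F]

lemma act_one (hp0 : 0 < p) (Z : W p n t F) : act p n t F Z (oneO p n t F) = 0 := by
  unfold act
  refine Finset.sum_eq_zero fun r _ => ?_
  cases r with
  | inl i => show omul p n t F _ (dEven p n t F i (oneO p n t F)) = 0
             rw [dEven_one, omul_zero_right]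
  | inr m => show omul p n t F _ (dOdd p n t F m (oneO p n t F)) = 0
             rw [dOdd_one, omul_zero_right]

lemma step1 (hp0 : 0 < p) (Z : W p n t F) (k : Fin n)
    (hbrk : brk0 p n t F Z (TH p n t F 1 (ovar p n t F k)) = 0) (s : Fin n ⊕ Fin n) :
    dEven p n t F k (Z s) = 0 := by
  have h2 := brk_eq p n t F Z _ hbrk s
  -- LHS : act (TH 1 (ovar k)) (Z s) = (-1)^1 • dEven k (Z s)
  have hL : act p n t F (TH p n t F 1 (ovar p n t F k)) (Z s) =
      ((-1 : F) ^ 1) • dEven p n t F k (Z s) := by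
    unfold act
    rw [Fintype.sum_sum_type]
    have hs2 : (∑ m : Fin n, omul p n t F (TH p n t F 1 (ovar p n t F k) (Sum.inr m))
        (dd p n t F (Sum.inr m) (Z s))) = 0 := by
      refine Finset.sum_eq_zero fun m _ => ?_
      rw [TH_inr, dEven_ovar, omul_zero_left]
    have hs1 : (∑ i : Fin n, omul p n t F (TH p n t F 1 (ovar p n t F k) (Sum.inl i))
        (dd p n t F (Sum.inl i) (Z s))) = ((-1 : F) ^ 1) • dEven p n t F k (Z s) := by
      rw [Finset.sum_eq_single k]
      · rw [TH_inl, dOdd_ovar, if_pos rfl]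
        show omul p n t F (((-1:F)^1) • oneO p n t F) (dEven p n t F k (Z s)) = _
        rw [omul_smul_left, omul_one_left p n t F hp0]
      · intro i _ hik
        rw [TH_inl, dOdd_ovar, if_neg hik, smul_zero]
        show omul p n t F 0 (dEven p n t F i (Z s)) = 0
        rw [omul_zero_left]
      · intro h; exact absurd (Finset.mem_univ k) h
    rw [hs1, hs2, add_zero]
  -- RHS : act Z (TH 1 (ovar k) s) = 0
  have hR : act p n t F Z (TH p n t F 1 (ovar p n t F k) s) = 0 := by
    cases s with
    | inl i =>
      rw [TH_inl, dOdd_ovar]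
      by_cases hik : i = k
      · rw [if_pos hik, act_smul, act_one p n t F hp0, smul_zero]
      · rw [if_neg hik, smul_zero, act_zero]
    | inr m =>
      rw [TH_inr, dEven_ovar, act_zero]
  rw [hL, hR] at h2
  rw [pow_one, neg_one_smul] at h2
  exact neg_eq_zero.mp h2

lemma Zvanish (hp0 : 0 < p) (Z : W p n t F)
    (hstep1 : ∀ s k, dEven p n t F k (Z s) = 0) (s : Fin n ⊕ Fin n)
    (x : Idx p n t) (i : Fin n) (hi : (x.1 i : ℕ) ≠ 0) : Z s x = 0 := by
  have hlt : ((x.1 i : ℕ) - 1) + 1 < p ^ t i := by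
    have := (x.1 i).isLt; omega
  set α : (jj : Fin n) → Fin (p ^ t jj) :=
    Function.update x.1 i ⟨(x.1 i : ℕ) - 1, by omega⟩ with hα
  have hαi : (α i : ℕ) = (x.1 i : ℕ) - 1 := by rw [hα, Function.update_self]
  have hlt2 : (α i : ℕ) + 1 < p ^ t i := by rw [hαi]; exact hlt
  have h0 := congrFun (hstep1 s i) ((α, x.2) : Idx p n t)
  rw [show dEven p n t F i (Z s) (α, x.2) =
      Z s (Function.update α i ⟨(α i : ℕ) + 1, hlt2⟩, x.2) from by
    simp only [dEven]; rw [dif_pos hlt2]] at h0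
  have hupd : Function.update α i ⟨(α i : ℕ) + 1, hlt2⟩ = x.1 := by
    funext jj
    by_cases hji : jj = i
    · subst hji
      rw [Function.update_self]
      exact Fin.ext (by simp only [hαi]; omega)
    · rw [Function.update_of_ne hji, hα, Function.update_of_ne hji]
  rw [hupd] at h0
  exact h0

end Aux6

/-- The center of `HO(n,n;t̲)_0̄` is zero. -/
theorem stmt18 (p n : ℕ) (t : Fin n → ℕ) (F : Type*) [Field F]
    (hp : p.Prime) (hp3 : 3 < p) [CharP F p] (hn : 3 ≤ n) (ht : ∀ i, 1 ≤ t i) :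
    ∀ Z ∈ HO0 p n t F, (∀ X ∈ HO0 p n t F, brk0 p n t F Z X = 0) → Z = 0 := by
  intro Z _ hZ
  have hp0 : 0 < p := hp.pos
  have h1 : ∀ i, 1 < p ^ t i := by
    intro i
    calc 1 < p := hp.one_lt
    _ = p ^ 1 := (pow_one p).symm
    _ ≤ p ^ t i := Nat.pow_le_pow_right hp0 (ht i)
  have h2F : (2 : F) ≠ 0 := by
    intro h
    have hd := (CharP.cast_eq_zero_iff F p 2).mp h
    have := Nat.le_of_dvd (by norm_num) hd
    omega
  -- memberships
  have hom_ovar : ∀ k, Homog p n t F 1 (ovar p n t F k) := by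
    intro k x hx
    simp only [ovar] at hx
    by_cases hc : (∀ j, ((x.1 j : ℕ)) = 0) ∧ x.2 = {k}
    · rw [hc.2]; simp
    · rw [if_neg hc] at hx; exact absurd rfl hx
  have hom_mon : ∀ j k, Homog p n t F 1 (mon p n t F j k) := by
    intro j k x hx
    simp only [mon] at hx
    by_cases hc : (∀ i, ((x.1 i : ℕ)) = if i = j then 1 else 0) ∧ x.2 = {k}
    · rw [hc.2]; simp
    · rw [if_neg hc] at hx; exact absurd rfl hx
  have memTH : ∀ a : O p n t F, Homog p n t F 1 a → TH p n t F 1 a ∈ HO0 p n t F :=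
    fun a ha => ⟨a, ha, rfl⟩
  -- Step 1
  have hstep1 : ∀ s k, dEven p n t F k (Z s) = 0 := fun s k =>
    step1 p n t F hp0 Z k (hZ _ (memTH _ (hom_ovar k))) s
  have hzeroα : ∀ s (x : Idx p n t), (∃ i, (x.1 i : ℕ) ≠ 0) → Z s x = 0 := by
    rintro s x ⟨i, hi⟩
    exact Zvanish p n t F hp0 Z hstep1 s x i hi
  -- Z (inl l) = 0
  have hinl : ∀ l, Z (Sum.inl l) = 0 := by
    intro l
    have e1 := E1 p n t F hp0 Z l l (h1 l) (fun s => hstep1 s l)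
      (hZ _ (memTH _ (hom_mon l l))) l
    funext x
    have hx := congrFun e1 x
    rw [omul_ovar_dOdd p n t F hp0] at hx
    rw [if_pos rfl] at hx
    simp only [Pi.smul_apply, smul_eq_mul, pow_one] at hx
    by_cases hl : l ∈ x.2
    · rw [if_pos hl] at hx
      -- hx : Z (inl l) x = -1 * Z (inl l) x
      have h2 : (2 : F) * Z (Sum.inl l) x = 0 := by
        linear_combination hx
      have := (mul_eq_zero.mp h2).resolve_left h2F
      simpa using this
    · rw [if_neg hl] at hx
      have h3 : Z (Sum.inl l) x = 0 := by
        linear_combination hx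
      simpa using h3
  -- support of Z (inr l)
  have hsupp : ∀ l (x : Idx p n t) (j : Fin n), j ≠ l → j ∈ x.2 → Z (Sum.inr l) x = 0 := by
    intro l x j hjl hjx
    have e2 := E2 p n t F hp0 Z j j (h1 j) (fun s => hstep1 s j)
      (hZ _ (memTH _ (hom_mon j j))) l
    rw [if_neg (Ne.symm hjl)] at e2
    have hx := congrFun e2 x
    rw [omul_ovar_dOdd p n t F hp0, if_pos hjx] at hx
    simpa using hx
  -- Z (inr k) = c * ovar k
  set j₀ : Fin n := ⟨0, by omega⟩ with hj₀
  set c : F := Z (Sum.inr j₀) ((fun i => ⟨0, pow_pos hp0 _⟩), {j₀}) with hc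
  have hck : ∀ k (x : Idx p n t), Z (Sum.inr k) x = c * ovar p n t F k x := by
    intro k x
    have e2 := E2 p n t F hp0 Z j₀ k (h1 j₀) (fun s => hstep1 s k)
      (hZ _ (memTH _ (hom_mon j₀ k))) j₀
    rw [if_pos rfl] at e2
    have hx := (congrFun e2 x).symm
    rw [omul_ovar p n t F hp0] at hx
    by_cases hk : k ∈ x.2
    · rw [if_pos hk] at hx
      by_cases hj : j₀ ∈ x.2.erase k
      · rw [show dOdd p n t F j₀ (Z (Sum.inr j₀)) (x.1, x.2.erase k) = 0 from by
          simp only [dOdd]; rw [if_pos hj], mul_zero] at hx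
        have hov : ovar p n t F k x = 0 := by
          simp only [ovar]; rw [if_neg]
          rintro ⟨-, h⟩
          obtain ⟨hjk, hjx⟩ := Finset.mem_erase.mp hj
          rw [h, Finset.mem_singleton] at hjx
          exact hjk hjx
        rw [hx, hov, mul_zero]
      · rw [show dOdd p n t F j₀ (Z (Sum.inr j₀)) (x.1, x.2.erase k) =
            (-1 : F) ^ (((x.2.erase k).filter fun b => b < j₀).card) *
              Z (Sum.inr j₀) (x.1, insert j₀ (x.2.erase k)) from by
          simp only [dOdd]; rw [if_neg hj]] at hx
        by_cases hα : ∀ i, (x.1 i : ℕ) = 0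
        · by_cases he : x.2.erase k = ∅
          · rw [he] at hx
            simp only [Finset.filter_empty, Finset.card_empty, pow_zero, one_mul] at hx
            have hx1 : x.1 = fun i => (⟨0, pow_pos hp0 _⟩ : Fin (p ^ t i)) :=
              funext fun i => Fin.ext (by simpa using hα i)
            rw [hx1] at hx
            have hx2 : x.2 = {k} := by
              apply Finset.Subset.antisymm
              · intro b hb
                by_cases hbk : b = k
                · subst hbk; exact Finset.mem_singleton_self b
                · exact absurd (Finset.mem_erase.mpr ⟨hbk, hb⟩)
                    (he ▸ Finset.notMem_empty b)
              · simpa [Finset.singleton_subset_iff] using hk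
            have hov : ovar p n t F k x = 1 := by
              simp only [ovar]; rw [if_pos ⟨hα, hx2⟩]
            rw [hov, mul_one, hx, hc]
            rfl
          · obtain ⟨b, hb⟩ := Finset.nonempty_iff_ne_empty.mpr he
            have hbj : b ≠ j₀ := fun h => hj (h ▸ hb)
            have hg0 : Z (Sum.inr j₀) (x.1, insert j₀ (x.2.erase k)) = 0 :=
              hsupp j₀ _ b hbj (Finset.mem_insert_of_mem hb)
            rw [hg0, mul_zero, mul_zero] at hx
            have hov : ovar p n t F k x = 0 := by
              simp only [ovar]; rw [if_neg]
              rintro ⟨-, h⟩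
              apply he
              rw [h]
              exact Finset.erase_singleton k
            rw [hx, hov, mul_zero]
        · push_neg at hα
          obtain ⟨i, hi⟩ := hα
          have hg0 : Z (Sum.inr j₀) (x.1, insert j₀ (x.2.erase k)) = 0 :=
            hzeroα _ _ ⟨i, hi⟩
          rw [hg0, mul_zero, mul_zero] at hx
          have hov : ovar p n t F k x = 0 := by
            simp only [ovar]; rw [if_neg]
            rintro ⟨h, -⟩
            exact hi (h i)
          rw [hx, hov, mul_zero]
    · rw [if_neg hk] at hx
      have hov : ovar p n t F k x = 0 := by
        simp only [ovar]; rw [if_neg]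
        rintro ⟨-, h⟩
        rw [h] at hk
        simp at hk
      rw [hx, hov, mul_zero]
  have hZinr : ∀ m, Z (Sum.inr m) = c • ovar p n t F m := by
    intro m
    funext x
    rw [hck m x]
    simp
  -- final test with a cubic exterior monomial
  set k₀ : Fin n := ⟨0, by omega⟩ with hk₀
  set l₀ : Fin n := ⟨1, by omega⟩ with hl₀
  set m₀ : Fin n := ⟨2, by omega⟩ with hm₀
  have hkl : k₀ ≠ l₀ := by simp [hk₀, hl₀, Fin.ext_iff]
  have hkm : k₀ ≠ m₀ := by simp [hk₀, hm₀, Fin.ext_iff]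
  have hlm : l₀ ≠ m₀ := by simp [hl₀, hm₀, Fin.ext_iff]
  set b3 : O p n t F := (fun x =>
    if (∀ i, (x.1 i : ℕ) = 0) ∧ x.2 = {k₀, l₀, m₀} then 1 else 0) with hb3
  have hom_b3 : Homog p n t F 1 b3 := by
    intro x hx
    simp only [hb3] at hx
    by_cases hcond : (∀ i, ((x.1 i : ℕ)) = 0) ∧ x.2 = {k₀, l₀, m₀}
    · rw [hcond.2]
      rw [Finset.card_insert_of_notMem (by simp [hkl, hkm]),
        Finset.card_insert_of_notMem (by simp [hlm]), Finset.card_singleton]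
    · rw [if_neg hcond] at hx; exact absurd rfl hx
  have hbrk3 := brk_eq p n t F Z _ (hZ _ (memTH _ hom_b3)) (Sum.inl k₀)
  rw [hinl k₀, act_zero, TH_inl, act_smul] at hbrk3
  rw [pow_one, neg_one_smul] at hbrk3
  have hact3 : act p n t F Z (dOdd p n t F k₀ b3) = 0 := neg_eq_zero.mp hbrk3.symm
  -- evaluate at x0
  set x0 : Idx p n t := ((fun i => ⟨0, pow_pos hp0 _⟩), {l₀, m₀}) with hx0
  have hval := congrFun hact3 x0
  rw [show act p n t F Z (dOdd p n t F k₀ b3) x0 = c * 2 from ?_] at hval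
  · -- c * 2 = 0 → c = 0
    have hc0 : c = 0 := by
      rcases mul_eq_zero.mp hval with h | h
      · exact h
      · exact absurd h h2F
    funext r
    cases r with
    | inl i => exact hinl i
    | inr m => rw [hZinr m, hc0, zero_smul]; rfl
  · -- the computation
    unfold act
    rw [Finset.sum_apply, Fintype.sum_sum_type]
    have hs1 : (∑ i : Fin n,
        omul p n t F (Z (Sum.inl i)) (dd p n t F (Sum.inl i) (dOdd p n t F k₀ b3)) x0) = 0 := by
      refine Finset.sum_eq_zero fun i _ => ?_
      rw [hinl i, omul_zero_left]
      rfl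
    have hdb3 : dOdd p n t F k₀ b3 x0 = 1 := by
      have hknotin : k₀ ∉ ({l₀, m₀} : Finset (Fin n)) := by
        simp [hkl, hkm]
      simp only [dOdd]
      rw [if_neg (by exact hknotin)]
      have hfilt : ({l₀, m₀} : Finset (Fin n)).filter (fun b => b < k₀) = ∅ := by
        refine Finset.filter_eq_empty_iff.mpr fun b _ => ?_
        rw [hk₀]
        intro hlt
        exact absurd hlt (by simp [Fin.lt_def])
      rw [show (x0.2.filter fun b => b < k₀) = ∅ from hfilt]
      simp only [Finset.card_empty, pow_zero, one_mul]
      exact if_pos ⟨fun i => rfl, rfl⟩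
    have hs2 : (∑ m : Fin n,
        omul p n t F (Z (Sum.inr m)) (dd p n t F (Sum.inr m) (dOdd p n t F k₀ b3)) x0) = c * 2 := by
      have hterm : ∀ m : Fin n,
          omul p n t F (Z (Sum.inr m)) (dd p n t F (Sum.inr m) (dOdd p n t F k₀ b3)) x0 =
          c * (if m ∈ x0.2 then 1 else 0) := by
        intro m
        show omul p n t F (Z (Sum.inr m)) (dOdd p n t F m (dOdd p n t F k₀ b3)) x0 = _
        rw [hZinr m, omul_smul_left, Pi.smul_apply, smul_eq_mul,
          omul_ovar_dOdd p n t F hp0, hdb3]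
      rw [Finset.sum_congr rfl fun m _ => hterm m, ← Finset.mul_sum]
      congr 1
      rw [Finset.sum_ite_mem, Finset.univ_inter, Finset.sum_const]
      rw [show (x0.2).card = 2 from by rw [hx0]; exact Finset.card_pair hlm]
      simp
    rw [hs1, hs2, zero_add]
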